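/- Let E = ℝ^d, μ > 0, ρ > 0, and let ℓ : E → ℝ be continuous and μ-strongly convex, with P : E → E a proximal map of ℓ/ρ. Let ε ∈ (0,1) and δ ≥ 0, let D : E → E satisfy the (ε, δ)-weakly nonexpansive residual condition, and assume ε/(μ(1 + ε − 2ε²)) < 1/ρ. Define T = (1/2)I + (1/2)(2D − I)∘(2P − I), ε_T = (ρ + ρε + με + 2με²)/(ρ + μ + 2με) and δ_T² = (ρ + ρε + με + 2με²)·δ²/(ε(ρ + μ + 2με)). Assume T has a fixed point v* ∈ E, and consider the iteration v⁽ᵏ⁺¹⁾ = T(v⁽ᵏ⁾) with x⁽ᵏ⁾ = P(v⁽ᵏ⁾) and x* = P(v*). Then ε_T < 1, and for every r' > δ_T/√(1 − ε_T²) there exists K such that for all k ≥ K: ‖v⁽ᵏ⁾ − v*‖ ≤ r' and ‖x⁽ᵏ⁾ − x*‖ ≤ (ρ/(ρ+μ))·r'; i.e., the ADMM-PnP iterates converge into a ball of radius δ_T/√(1 − ε_T²) (respectively (ρ/(ρ+μ))·δ_T/√(1 − ε_T²) for the primal iterates) around the fixed point. -/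

import Mathlib

set_option maxHeartbeats 1000000

/-- `D` satisfies the (ε, δ)-weakly nonexpansive residual condition. -/
def ResidualCond {E : Type*} [NormedAddCommGroup E] [InnerProductSpace ℝ E]
    (ε δ : ℝ) (D : E → E) : Prop :=
  ∀ x y : E, ‖(D x - x) - (D y - y)‖ ^ 2 ≤ ε ^ 2 * ‖x - y‖ ^ 2 + δ ^ 2

section Aux

variable {E : Type*} [NormedAddCommGroup E] [InnerProductSpace ℝ E]

lemma refl_exp (w u : E) : ‖w + (w - u)‖^2 = 4*‖w‖^2 - 4*(inner ℝ u w : ℝ) + ‖u‖^2 := by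
  simp only [← real_inner_self_eq_norm_sq, inner_add_left, inner_add_right,
    inner_sub_left, inner_sub_right, real_inner_comm u w]
  ring

lemma combo_norm (p x : E) (t : ℝ) :
    ‖(1-t)•p + t•x‖^2 = (1-t)*‖p‖^2 + t*‖x‖^2 - t*(1-t)*‖x-p‖^2 := by
  simp only [← real_inner_self_eq_norm_sq]
  simp only [inner_add_left, inner_add_right, inner_sub_left, inner_sub_right,
    real_inner_smul_left, real_inner_smul_right, real_inner_comm p x]
  ring

lemma prox_growth (c : ℝ) (hc : 0 < c)
    (f : E → ℝ) (hconv : ConvexOn ℝ Set.univ (fun x => f x - (c/2)*‖x‖^2))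
    (p : E) (hmin : IsMinOn f Set.univ p) (x : E) :
    f p + (c/2)*‖x - p‖^2 ≤ f x := by
  have hmin' : ∀ y : E, f p ≤ f y := fun y => hmin (Set.mem_univ y)
  have key : ∀ t : ℝ, 0 < t → t < 1 → f p + c/2*(1-t)*‖x-p‖^2 ≤ f x := by
    intro t ht0 ht1
    have hg := hconv.2 (Set.mem_univ p) (Set.mem_univ x)
      (by linarith : (0:ℝ) ≤ 1 - t) ht0.le (by ring)
    simp only [smul_eq_mul] at hg
    have hm := hmin' ((1-t)•p + t•x)
    have hcm := combo_norm p x t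
    have hlin : t * (f p + c/2*(1-t)*‖x-p‖^2) ≤ t * f x := by nlinarith [hg, hm, hcm]
    exact le_of_mul_le_mul_left hlin ht0
  by_contra hcon
  push_neg at hcon
  have hB0 : (0:ℝ) ≤ ‖x - p‖^2 := sq_nonneg _
  rcases eq_or_lt_of_le hB0 with hB0' | hBpos
  · have := key (1/2) (by norm_num) (by norm_num)
    nlinarith
  · have hΔpos : 0 < f p + c/2*‖x-p‖^2 - f x := by linarith
    set Δ := f p + c/2*‖x-p‖^2 - f x with hΔ
    have hcB : 0 < c * ‖x-p‖^2 := mul_pos hc hBpos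
    have ht0 : 0 < min (1/2 : ℝ) (Δ/(c*‖x-p‖^2)) := lt_min (by norm_num) (div_pos hΔpos hcB)
    have ht1 : min (1/2 : ℝ) (Δ/(c*‖x-p‖^2)) < 1 := lt_of_le_of_lt (min_le_left _ _) (by norm_num)
    have hk := key _ ht0 ht1
    have h2 : (min (1/2 : ℝ) (Δ/(c*‖x-p‖^2))) * (c * ‖x-p‖^2) ≤ Δ := by
      calc (min (1/2 : ℝ) (Δ/(c*‖x-p‖^2))) * (c*‖x-p‖^2)
          ≤ (Δ/(c*‖x-p‖^2)) * (c*‖x-p‖^2) :=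
            mul_le_mul_of_nonneg_right (min_le_right _ _) hcB.le
        _ = Δ := div_mul_cancel₀ _ hcB.ne'
    nlinarith [hk, h2, hΔpos]

lemma key_final (μ ρ ε δ W U R ip s : ℝ)
    (hμ : 0 < μ) (hρ : 0 < ρ) (hε0 : 0 < ε) (hε1 : ε < 1)
    (hW0 : 0 ≤ W) (hR0 : 0 ≤ R) (hU0 : 0 ≤ U) (hs0 : 0 ≤ s)
    (hWs : (ρ+μ)^2*W ≤ ρ^2*s)
    (hUs : ρ*U ≤ ρ*s - 4*μ*W)
    (hRU : R ≤ ε^2*U + δ^2)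
    (hip : 2*(ε*(ρ+μ+2*μ*ε)/ρ)*ip ≤ (ε*(ρ+μ+2*μ*ε)/ρ)^2*W + R) :
    W + 2*ip + R ≤ ((ρ+ρ*ε+μ*ε+2*μ*ε^2)/(ρ+μ+2*μ*ε))^2*s
      + (ρ+ρ*ε+μ*ε+2*μ*ε^2)*δ^2/(ε*(ρ+μ+2*μ*ε)) := by
  obtain ⟨den, hden⟩ : ∃ x : ℝ, x = ρ+μ+2*μ*ε := ⟨_, rfl⟩
  obtain ⟨N, hN⟩ : ∃ x : ℝ, x = ρ+ρ*ε+μ*ε+2*μ*ε^2 := ⟨_, rfl⟩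
  rw [← hden] at hip ⊢
  rw [← hN]
  have hdenpos : 0 < den := by rw [hden]; positivity
  have hNpos : 0 < N := by rw [hN]; positivity
  obtain ⟨t, htdef⟩ : ∃ x : ℝ, x = ε*den/ρ := ⟨_, rfl⟩
  rw [← htdef] at hip
  have ht : (0:ℝ) < t := by rw [htdef]; positivity
  have hNden : N = ρ + ε*den := by rw [hN, hden]; ring
  have hip2 : 2*ip ≤ t*W + R/t := by
    have heq : (t*W + R/t)*t = t^2*W + R := by field_simp
    refine le_of_mul_le_mul_right ?_ ht
    rw [heq]; nlinarith [hip]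
  have h1t : 1 + 1/t = N/(ε*den) := by
    rw [htdef, hNden]; field_simp; ring
  have step1 : W + 2*ip + R ≤ (1+t)*W + (N/(ε*den))*R := by
    have h' : (1 + 1/t)*R = (N/(ε*den))*R := by rw [h1t]
    have hexp : (1 + 1/t)*R = R/t + R := by ring
    linarith [hip2, h', hexp]
  have hNed : (0:ℝ) < N/(ε*den) := by positivity
  have step2 : (N/(ε*den))*R ≤ (N*ε/den)*U + N*δ^2/(ε*den) := by
    calc (N/(ε*den))*R ≤ (N/(ε*den))*(ε^2*U + δ^2) :=
          mul_le_mul_of_nonneg_left hRU hNed.le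
      _ = (N*ε/den)*U + N*δ^2/(ε*den) := by field_simp
  have hNe : (0:ℝ) < N*ε/den := by positivity
  have hUW : U ≤ s - (4*μ/ρ)*W := by
    rw [le_sub_iff_add_le, ← sub_nonneg]
    have h' : ρ * (s - (4*μ/ρ)*W - U) = ρ*s - 4*μ*W - ρ*U := by field_simp
    nlinarith [hUs]
  have step3 : (N*ε/den)*U ≤ (N*ε/den)*(s - (4*μ/ρ)*W) :=
    mul_le_mul_of_nonneg_left hUW hNe.le
  obtain ⟨C, hC⟩ : ∃ x : ℝ, x = 1 + t - 4*μ*N*ε/(ρ*den) := ⟨_, rfl⟩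
  have hsplit : (N/den)^2 = N*ρ/den^2 + N*ε/den := by
    rw [hNden]
    field_simp
  have main : C*W + (N*ε/den)*s ≤ (N/den)^2*s := by
    rcases le_or_gt C 0 with hC0 | hC0
    · have h1 : C*W ≤ 0 := mul_nonpos_of_nonpos_of_nonneg hC0 hW0
      have h2 : (N*ε/den)*s ≤ (N/den)^2*s := by
        have hnn : 0 ≤ (N*ρ/den^2)*s := by positivity
        rw [hsplit, add_mul]
        linarith [hnn]
      linarith
    · have hWle : W ≤ ρ^2/(ρ+μ)^2 * s := by
        rw [div_mul_eq_mul_div, le_div_iff₀ (by positivity : (0:ℝ) < (ρ+μ)^2)]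
        nlinarith [hWs]
      have h1 : C*W ≤ C*(ρ^2/(ρ+μ)^2*s) := mul_le_mul_of_nonneg_left hWle hC0.le
      have hCval : C = (ρ*den + ε*den^2 - 4*μ*ε*N)/(ρ*den) := by
        rw [hC, htdef]; field_simp
      have hpoly : den*(ρ*den + ε*den^2 - 4*μ*ε*N)
          + (4*μ^2*ρ*ε^2 + 4*μ^2*ρ*ε^3 + 4*μ^3*ε^3 + 8*μ^3*ε^4) = N*(ρ+μ)^2 := by
        rw [hden, hN]; ring
      have base : den*(ρ*den + ε*den^2 - 4*μ*ε*N) ≤ N*(ρ+μ)^2 := by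
        nlinarith [hpoly, mul_pos (mul_pos (mul_pos hμ hμ) hρ) (mul_pos hε0 hε0),
          mul_pos (mul_pos (mul_pos hμ hμ) hρ) (mul_pos (mul_pos hε0 hε0) hε0),
          mul_pos (mul_pos (mul_pos hμ hμ) hμ) (mul_pos (mul_pos hε0 hε0) hε0),
          mul_pos (mul_pos (mul_pos hμ hμ) hμ) (mul_pos (mul_pos hε0 hε0) (mul_pos hε0 hε0))]
      have h2 : C*(ρ^2/(ρ+μ)^2) ≤ N*ρ/den^2 := by
        rw [hCval, div_mul_div_comm, div_le_div_iff₀ (by positivity) (by positivity)]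
        nlinarith [mul_le_mul_of_nonneg_left base (by positivity : (0:ℝ) ≤ ρ^2*den)]
      have h3 := mul_le_mul_of_nonneg_right h2 hs0
      rw [hsplit]
      nlinarith [h1, h3]
  have htW : (1+t)*W = C*W + (4*μ*N*ε/(ρ*den))*W := by rw [hC]; ring
  have hlast : (N*ε/den)*((4*μ/ρ)*W) = (4*μ*N*ε/(ρ*den))*W := by field_simp
  calc W + 2*ip + R ≤ (1+t)*W + (N/(ε*den))*R := step1
    _ ≤ (1+t)*W + ((N*ε/den)*U + N*δ^2/(ε*den)) := by linarith [step2]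
    _ ≤ (1+t)*W + ((N*ε/den)*(s - (4*μ/ρ)*W) + N*δ^2/(ε*den)) := by linarith [step3]
    _ = C*W + (N*ε/den)*s + N*δ^2/(ε*den) := by
        rw [htW, mul_sub, hlast]; ring
    _ ≤ (N/den)^2*s + N*δ^2/(ε*den) := by linarith [main]

end Aux

theorem stmt19 {d : ℕ} (μ ρ : ℝ) (hμ : 0 < μ) (hρ : 0 < ρ)
    (ℓ : EuclideanSpace ℝ (Fin d) → ℝ) (hcont : Continuous ℓ)
    (hsc : ConvexOn ℝ Set.univ (fun x => ℓ x - (μ / 2) * ‖x‖ ^ 2))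
    (P : EuclideanSpace ℝ (Fin d) → EuclideanSpace ℝ (Fin d))
    (hP : ∀ v, IsMinOn (fun x => (1 / ρ) * ℓ x + (1 / 2) * ‖x - v‖ ^ 2) Set.univ (P v))
    (ε δ : ℝ) (hε : ε ∈ Set.Ioo (0 : ℝ) 1) (hδ : 0 ≤ δ)
    (D : EuclideanSpace ℝ (Fin d) → EuclideanSpace ℝ (Fin d))
    (hD : ResidualCond ε δ D)
    (hstep : ε / (μ * (1 + ε - 2 * ε ^ 2)) < 1 / ρ)
    (T : EuclideanSpace ℝ (Fin d) → EuclideanSpace ℝ (Fin d))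
    (hT : T = fun v =>
      (1 / 2 : ℝ) • v + (1 / 2 : ℝ) • (2 • D (2 • P v - v) - (2 • P v - v)))
    (εT δT2 : ℝ)
    (hεT : εT = (ρ + ρ * ε + μ * ε + 2 * μ * ε ^ 2) / (ρ + μ + 2 * μ * ε))
    (hδT2 : δT2 = (ρ + ρ * ε + μ * ε + 2 * μ * ε ^ 2) * δ ^ 2 / (ε * (ρ + μ + 2 * μ * ε)))
    (vstar : EuclideanSpace ℝ (Fin d)) (hfix : T vstar = vstar)
    (v x : ℕ → EuclideanSpace ℝ (Fin d))
    (hv : ∀ k, v (k + 1) = T (v k))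
    (hx : ∀ k, x k = P (v k))
    (xstar : EuclideanSpace ℝ (Fin d)) (hxstar : xstar = P vstar) :
    εT < 1 ∧
      ∀ r' : ℝ, Real.sqrt δT2 / Real.sqrt (1 - εT ^ 2) < r' →
        ∃ K : ℕ, ∀ k ≥ K,
          ‖v k - vstar‖ ≤ r' ∧ ‖x k - xstar‖ ≤ (ρ / (ρ + μ)) * r' := by
  obtain ⟨hε0, hε1⟩ := hε
  have hc : (0:ℝ) < 1 + μ/ρ := by positivity
  -- convexity of the prox objective minus its strong-convexity quadratic
  have hconv : ∀ w : EuclideanSpace ℝ (Fin d), ConvexOn ℝ Set.univ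
      (fun y : EuclideanSpace ℝ (Fin d) =>
        ((1/ρ)*ℓ y + (1/2)*‖y - w‖^2) - ((1+μ/ρ)/2)*‖y‖^2) := by
    intro w
    have h1 : ConvexOn ℝ Set.univ
        (fun y : EuclideanSpace ℝ (Fin d) => (1/ρ)*(ℓ y - (μ/2)*‖y‖^2)) := by
      have h := hsc.smul (by positivity : (0:ℝ) ≤ 1/ρ)
      simpa [smul_eq_mul] using h
    have h2 : ConvexOn ℝ Set.univ
        (fun y : EuclideanSpace ℝ (Fin d) => -(inner ℝ y w : ℝ) + (1/2)*‖w‖^2) := by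
      refine ⟨convex_univ, ?_⟩
      intro a _ b _ p q hp hq hpq
      simp only [inner_add_left, real_inner_smul_left, smul_eq_mul]
      apply le_of_eq
      linear_combination ((1/2:ℝ)*‖w‖^2) * hpq.symm
    have hsum := h1.add h2
    have heq : (fun y : EuclideanSpace ℝ (Fin d) =>
        ((1/ρ)*ℓ y + (1/2)*‖y - w‖^2) - ((1+μ/ρ)/2)*‖y‖^2)
        = fun y => (1/ρ)*(ℓ y - (μ/2)*‖y‖^2) + (-(inner ℝ y w : ℝ) + (1/2)*‖w‖^2) := by
      funext y
      have hns : ‖y - w‖^2 = ‖y‖^2 - 2*(inner ℝ y w : ℝ) + ‖w‖^2 := norm_sub_sq_real y w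
      rw [hns]; field_simp; ring
    rw [heq]; exact hsum
  -- quadratic growth at the prox minimizer
  have hgrow : ∀ w y : EuclideanSpace ℝ (Fin d),
      ((1/ρ)*ℓ (P w) + (1/2)*‖P w - w‖^2) + ((1+μ/ρ)/2)*‖y - P w‖^2
        ≤ (1/ρ)*ℓ y + (1/2)*‖y - w‖^2 := by
    intro w y
    exact prox_growth (1+μ/ρ) hc _ (hconv w) (P w) (hP w) y
  -- strong monotonicity of P
  have hmono : ∀ a b : EuclideanSpace ℝ (Fin d),
      (1+μ/ρ)*‖P a - P b‖^2 ≤ (inner ℝ (a-b) (P a - P b) : ℝ) := by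
    intro a b
    have h1 := hgrow a (P b)
    have h2 := hgrow b (P a)
    have e1 : ‖P a - a‖^2 = ‖P a‖^2 - 2*(inner ℝ (P a) a : ℝ) + ‖a‖^2 := norm_sub_sq_real _ _
    have e2 : ‖P b - b‖^2 = ‖P b‖^2 - 2*(inner ℝ (P b) b : ℝ) + ‖b‖^2 := norm_sub_sq_real _ _
    have e3 : ‖P b - a‖^2 = ‖P b‖^2 - 2*(inner ℝ (P b) a : ℝ) + ‖a‖^2 := norm_sub_sq_real _ _
    have e4 : ‖P a - b‖^2 = ‖P a‖^2 - 2*(inner ℝ (P a) b : ℝ) + ‖b‖^2 := norm_sub_sq_real _ _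
    have e5 : ‖P b - P a‖^2 = ‖P a - P b‖^2 := by rw [norm_sub_rev]
    have eip : (inner ℝ (a-b) (P a - P b) : ℝ)
        = (inner ℝ (P a) a : ℝ) - (inner ℝ (P b) a : ℝ) - (inner ℝ (P a) b : ℝ)
          + (inner ℝ (P b) b : ℝ) := by
      simp only [inner_sub_left, inner_sub_right]
      rw [real_inner_comm a (P a), real_inner_comm a (P b),
        real_inner_comm b (P a), real_inner_comm b (P b)]
      ring
    nlinarith [h1, h2, e1, e2, e3, e4, e5, eip]
  -- multiplied form
  have hmono2 : ∀ a b : EuclideanSpace ℝ (Fin d),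
      (ρ+μ)*‖P a - P b‖^2 ≤ ρ*(inner ℝ (a-b) (P a - P b) : ℝ) := by
    intro a b
    have h := mul_le_mul_of_nonneg_left (hmono a b) hρ.le
    have hf : ρ*((1+μ/ρ)*‖P a - P b‖^2) = (ρ+μ)*‖P a - P b‖^2 := by
      field_simp
    linarith [h, hf.ge, hf.le]
  -- contraction of P (squared form)
  have hPcontr : ∀ a b : EuclideanSpace ℝ (Fin d),
      (ρ+μ)^2*‖P a - P b‖^2 ≤ ρ^2*‖a - b‖^2 := by
    intro a b
    by_cases hw : ‖P a - P b‖ = 0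
    · rw [hw]
      have : (0:ℝ) ≤ ρ^2*‖a-b‖^2 := by positivity
      simpa using this
    · have hw0 : 0 < ‖P a - P b‖ := lt_of_le_of_ne (norm_nonneg _) (Ne.symm hw)
      have hcs := real_inner_le_norm (a-b) (P a - P b)
      have hcs' : ρ*(inner ℝ (a-b) (P a - P b) : ℝ) ≤ ρ*(‖a-b‖*‖P a - P b‖) :=
        mul_le_mul_of_nonneg_left hcs hρ.le
      have hlin : (ρ+μ)*‖P a - P b‖ ≤ ρ*‖a-b‖ := by
        refine le_of_mul_le_mul_right ?_ hw0
        nlinarith [hmono2 a b, hcs']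
      have hsq := mul_le_mul hlin hlin (by positivity) (by positivity)
      nlinarith [hsq]
  -- reflection bound
  have hrefl : ∀ a b : EuclideanSpace ℝ (Fin d),
      ρ*‖(2•P a - a) - (2•P b - b)‖^2 ≤ ρ*‖a-b‖^2 - 4*μ*‖P a - P b‖^2 := by
    intro a b
    have hvec : (2•P a - a) - (2•P b - b) = (P a - P b) + ((P a - P b) - (a - b)) := by
      rw [two_smul, two_smul]; abel
    have hexp : ‖(2•P a - a) - (2•P b - b)‖^2
        = 4*‖P a - P b‖^2 - 4*(inner ℝ (a-b) (P a - P b) : ℝ) + ‖a-b‖^2 := by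
      rw [hvec, refl_exp]
    rw [hexp]
    nlinarith [hmono2 a b]
  -- contraction of T
  have hTcontr : ∀ u : EuclideanSpace ℝ (Fin d),
      ‖T u - T vstar‖^2 ≤ εT^2*‖u - vstar‖^2 + δT2 := by
    intro u
    have hTdiff : T u - T vstar = (P u - P vstar)
        + ((D (2•P u - u) - (2•P u - u)) - (D (2•P vstar - vstar) - (2•P vstar - vstar))) := by
      rw [hT]
      simp only [two_smul]
      module
    rw [hTdiff, norm_add_sq_real, hεT, hδT2]
    have hip : 2*(ε*(ρ+μ+2*μ*ε)/ρ)*(inner ℝ (P u - P vstar)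
          ((D (2•P u - u) - (2•P u - u)) - (D (2•P vstar - vstar) - (2•P vstar - vstar))) : ℝ)
        ≤ (ε*(ρ+μ+2*μ*ε)/ρ)^2*‖P u - P vstar‖^2
          + ‖(D (2•P u - u) - (2•P u - u)) - (D (2•P vstar - vstar) - (2•P vstar - vstar))‖^2 := by
      have h0 : (0:ℝ) ≤ ‖(ε*(ρ+μ+2*μ*ε)/ρ)•(P u - P vstar)
          - ((D (2•P u - u) - (2•P u - u)) - (D (2•P vstar - vstar) - (2•P vstar - vstar)))‖^2 :=
        sq_nonneg _
      rw [norm_sub_sq_real, real_inner_smul_left, norm_smul] at h0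
      rw [mul_pow, Real.norm_eq_abs, sq_abs] at h0
      linarith
    exact key_final μ ρ ε δ _ _ _ _ _ hμ hρ hε0 hε1 (sq_nonneg _) (sq_nonneg _)
      (sq_nonneg _) (sq_nonneg _) (hPcontr u vstar) (hrefl u vstar)
      (hD _ _) hip
  -- εT < 1 and basic positivity
  have hquad : 0 < 1 + ε - 2*ε^2 := by nlinarith
  have hρε : ρ*ε < μ*(1+ε-2*ε^2) := by
    rw [div_lt_div_iff₀ (by positivity) hρ] at hstep
    nlinarith [hstep]
  have hεT1 : εT < 1 := by
    rw [hεT, div_lt_one (by positivity)]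
    nlinarith [hρε]
  have hεT0 : 0 < εT := by rw [hεT]; positivity
  have hδT20 : 0 ≤ δT2 := by rw [hδT2]; positivity
  have h1e : 0 < 1 - εT^2 := by nlinarith
  refine ⟨hεT1, ?_⟩
  intro r' hr'
  have hr'0 : 0 < r' := lt_of_le_of_lt (by positivity) hr'
  have hsq : δT2/(1-εT^2) < r'^2 := by
    rw [← Real.sqrt_div hδT20] at hr'
    exact (Real.sqrt_lt' hr'0).mp hr'
  -- recursion
  have hrec : ∀ k, ‖v (k+1) - vstar‖^2 ≤ εT^2*‖v k - vstar‖^2 + δT2 := by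
    intro k
    rw [hv k]
    calc ‖T (v k) - vstar‖^2 = ‖T (v k) - T vstar‖^2 := by rw [hfix]
      _ ≤ εT^2*‖v k - vstar‖^2 + δT2 := hTcontr (v k)
  have hgeom : ∀ k, ‖v k - vstar‖^2 ≤ (εT^2)^k * ‖v 0 - vstar‖^2 + δT2/(1-εT^2) := by
    intro k
    induction k with
    | zero =>
      have h0 : (0:ℝ) ≤ δT2/(1-εT^2) := by positivity
      simp only [pow_zero, one_mul]
      linarith
    | succ n ih =>
      have hq : (0:ℝ) ≤ εT^2 := sq_nonneg _
      have h2 := mul_le_mul_of_nonneg_left ih hq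
      have h3 : εT^2*(δT2/(1-εT^2)) + δT2 = δT2/(1-εT^2) := by
        rw [eq_div_iff h1e.ne']; field_simp; ring
      calc ‖v (n+1) - vstar‖^2 ≤ εT^2*‖v n - vstar‖^2 + δT2 := hrec n
        _ ≤ εT^2*((εT^2)^n*‖v 0 - vstar‖^2 + δT2/(1-εT^2)) + δT2 := by linarith
        _ = (εT^2)^(n+1)*‖v 0 - vstar‖^2 + (εT^2*(δT2/(1-εT^2)) + δT2) := by ring
        _ = (εT^2)^(n+1)*‖v 0 - vstar‖^2 + δT2/(1-εT^2) := by rw [h3]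
  -- choose K
  have hΔpos : 0 < r'^2 - δT2/(1-εT^2) := by linarith
  have ha0 : (0:ℝ) ≤ ‖v 0 - vstar‖^2 := sq_nonneg _
  have hqlt1 : εT^2 < 1 := by nlinarith
  obtain ⟨K, hK⟩ : ∃ K : ℕ, (εT^2)^K * ‖v 0 - vstar‖^2 < r'^2 - δT2/(1-εT^2) := by
    rcases eq_or_lt_of_le ha0 with h0 | h0
    · exact ⟨0, by rw [pow_zero, one_mul, ← h0]; linarith⟩
    · obtain ⟨n, hn⟩ := exists_pow_lt_of_lt_one
        (div_pos hΔpos h0) hqlt1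
      refine ⟨n, ?_⟩
      rw [div_eq_mul_inv] at hn
      calc (εT^2)^n * ‖v 0 - vstar‖^2
          < ((r'^2 - δT2/(1-εT^2)) * (‖v 0 - vstar‖^2)⁻¹) * ‖v 0 - vstar‖^2 :=
            mul_lt_mul_of_pos_right hn h0
        _ = r'^2 - δT2/(1-εT^2) := by rw [inv_mul_cancel_right₀ h0.ne']
  refine ⟨K, fun k hk => ?_⟩
  have hpow : (εT^2)^k ≤ (εT^2)^K := pow_le_pow_of_le_one (sq_nonneg _) hqlt1.le hk
  have hvk2 : ‖v k - vstar‖^2 < r'^2 := by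
    have h1 := hgeom k
    have h2 := mul_le_mul_of_nonneg_right hpow ha0
    calc ‖v k - vstar‖^2 ≤ (εT^2)^k * ‖v 0 - vstar‖^2 + δT2/(1-εT^2) := h1
      _ ≤ (εT^2)^K * ‖v 0 - vstar‖^2 + δT2/(1-εT^2) := by linarith
      _ < r'^2 := by linarith
  have hvk : ‖v k - vstar‖ ≤ r' := by
    have := (pow_le_pow_iff_left₀ (norm_nonneg _) hr'0.le two_ne_zero).mp hvk2.le
    exact this
  refine ⟨hvk, ?_⟩
  rw [hx, hxstar]
  have h2 : ((ρ+μ)*‖P (v k) - P vstar‖)^2 ≤ (ρ*‖v k - vstar‖)^2 := by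
    have := hPcontr (v k) vstar
    nlinarith [this]
  have h3 : (ρ+μ)*‖P (v k) - P vstar‖ ≤ ρ*‖v k - vstar‖ :=
    (pow_le_pow_iff_left₀ (by positivity) (by positivity) two_ne_zero).mp h2
  have h4 : ρ*‖v k - vstar‖ ≤ ρ*r' := mul_le_mul_of_nonneg_left hvk hρ.le
  rw [div_mul_eq_mul_div, le_div_iff₀ (by positivity : (0:ℝ) < ρ+μ)]
  nlinarith [h3, h4]
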